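/- Let 0 < a ≤ 1. Suppose w : (0,1] → ℝ is continuous, differentiable on (0,1), satisfies 0 ≤ w(x) ≤ 1 for all x ∈ (0,1], solves √(Δ_a(w(x)))·w'(x) = −(1−w(x)²)/x on (0,1), and w(1) = 0. Then w(y) ≥ (1−y²)/(1+y²) for all y ∈ (0,1]. -/

import Mathlib

open Filter Set

/-- For `0 < a ≤ 1`, a solution of the uniformization ODE with `0 ≤ w ≤ 1` and `w 1 = 0`
satisfies `w(y) ≥ (1-y²)/(1+y²)` on `(0,1]`. -/
theorem stmt_3 (a : ℝ) (ha0 : 0 < a) (ha1 : a ≤ 1) (w : ℝ → ℝ)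
    (hcont : ContinuousOn w (Set.Ioc (0:ℝ) 1))
    (hdiff : ∀ x ∈ Set.Ioo (0:ℝ) 1, DifferentiableAt ℝ w x)
    (hbound : ∀ x ∈ Set.Ioc (0:ℝ) 1, 0 ≤ w x ∧ w x ≤ 1)
    (hode : ∀ x ∈ Set.Ioo (0:ℝ) 1,
      Real.sqrt ((1 - a^2) * (w x)^2 + a^2) * deriv w x = -(1 - (w x)^2) / x)
    (hw1 : w 1 = 0) :
    ∀ y ∈ Set.Ioc (0:ℝ) 1, (1 - y^2) / (1 + y^2) ≤ w y := by
  intro y hy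
  obtain ⟨hy0, hy1⟩ := hy
  set φ : ℝ → ℝ := fun x => (1 - w x) / ((1 + w x) * x ^ 2) with hφ
  have hsub : Set.Icc y 1 ⊆ Set.Ioc (0:ℝ) 1 := fun x hx => ⟨lt_of_lt_of_le hy0 hx.1, hx.2⟩
  have hsubo : Set.Ioo y 1 ⊆ Set.Ioo (0:ℝ) 1 := fun x hx => ⟨lt_trans hy0 hx.1, hx.2⟩
  -- continuity of φ on Icc y 1
  have hcφ : ContinuousOn φ (Set.Icc y 1) := by
    apply ContinuousOn.div
    · exact continuousOn_const.sub (hcont.mono hsub)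
    · exact (continuousOn_const.add (hcont.mono hsub)).mul
        ((continuousOn_id.mono (fun x hx => trivial)).pow 2)
    · intro x hx
      have hx' := hsub hx
      have h0 := (hbound x hx').1
      have hxpos : 0 < x := hx'.1
      positivity
  -- derivative facts on Ioo y 1
  have hder : ∀ x ∈ Set.Ioo y 1, HasDerivAt φ
      (((-(deriv w x)) * ((1 + w x) * x ^ 2) -
        (1 - w x) * (deriv w x * x ^ 2 + (1 + w x) * (2 * x))) /
        ((1 + w x) * x ^ 2) ^ 2) x := by
    intro x hx
    have hx' := hsubo hx
    have hW := hdiff x hx'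
    have hWd : HasDerivAt w (deriv w x) x := hW.hasDerivAt
    have h1 : HasDerivAt (fun x => 1 - w x) (-(deriv w x)) x := by
      exact ((hasDerivAt_const x (1:ℝ)).sub hWd).congr_deriv (by ring)
    have hx2 : HasDerivAt (fun x : ℝ => x ^ 2) (2 * x) x := by
      simpa [mul_comm] using (hasDerivAt_pow 2 x)
    have h2 : HasDerivAt (fun x => (1 + w x) * x ^ 2)
        (deriv w x * x ^ 2 + (1 + w x) * (2 * x)) x := by
      have := (((hasDerivAt_const x (1:ℝ)).add hWd).mul hx2)
      exact this.congr_deriv (by simp only [Pi.add_apply]; ring)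
    have hne : (1 + w x) * x ^ 2 ≠ 0 := by
      have h0 := (hbound x ⟨hx'.1, le_of_lt hx'.2⟩).1
      have : 0 < x := hx'.1
      positivity
    exact h1.div h2 hne
  have hderiv_nonneg : ∀ x ∈ Set.Ioo y 1, 0 ≤ deriv φ x := by
    intro x hx
    have hx' := hsubo hx
    have hxm : x ∈ Set.Ioc (0:ℝ) 1 := ⟨hx'.1, le_of_lt hx'.2⟩
    obtain ⟨hW0, hW1⟩ := hbound x hxm
    have hxpos : 0 < x := hx'.1
    have hodex := hode x hx'
    -- key: deriv w x * x ≤ -(1 - (w x)^2)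
    have ha2 : 0 < a^2 := pow_pos ha0 2
    have ha2' : a^2 ≤ 1 := by nlinarith
    have hΔpos : 0 < (1 - a^2) * (w x)^2 + a^2 := by
      nlinarith [mul_nonneg (by linarith : (0:ℝ) ≤ 1 - a^2) (sq_nonneg (w x))]
    have hs0 : 0 < Real.sqrt ((1 - a^2) * (w x)^2 + a^2) := Real.sqrt_pos.mpr hΔpos
    have hs1 : Real.sqrt ((1 - a^2) * (w x)^2 + a^2) ≤ 1 := by
      rw [Real.sqrt_le_one]
      nlinarith [mul_nonneg (by linarith : (0:ℝ) ≤ 1 - a^2)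
        (by nlinarith : (0:ℝ) ≤ 1 - (w x)^2)]
    set s := Real.sqrt ((1 - a^2) * (w x)^2 + a^2)
    have hsx : s * deriv w x * x = -(1 - (w x)^2) := by
      have : s * deriv w x * x = (-(1 - (w x)^2) / x) * x := by rw [hodex]
      rw [this]; field_simp
    have hkey : deriv w x * x ≤ -(1 - (w x)^2) := by
      have hwx2 : 1 - (w x)^2 ≥ 0 := by nlinarith
      nlinarith [mul_pos hs0 hxpos]
    have hde := (hder x hx).deriv
    rw [hde]
    apply div_nonneg _ (sq_nonneg _)
    nlinarith
  -- monotonicity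
  have hmono : MonotoneOn φ (Set.Icc y 1) := by
    apply monotoneOn_of_deriv_nonneg (convex_Icc y 1) hcφ
    · intro x hx
      rw [interior_Icc] at hx
      exact ((hder x hx).differentiableAt).differentiableWithinAt
    · intro x hx
      rw [interior_Icc] at hx
      exact hderiv_nonneg x hx
  have h := hmono (Set.mem_Icc.mpr ⟨le_refl y, hy1⟩) (Set.mem_Icc.mpr ⟨hy1, le_refl 1⟩) hy1
  have hφ1 : φ 1 = 1 := by simp [hφ, hw1]
  rw [hφ1] at h
  obtain ⟨hw0, hwu⟩ := hbound y ⟨hy0, hy1⟩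
  have hden : 0 < (1 + w y) * y ^ 2 := by positivity
  rw [div_le_one hden] at h
  rw [div_le_iff₀ (by positivity : (0:ℝ) < 1 + y^2)]
  nlinarith
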